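/- There exist two-qubit density matrices ρ and ρ̃ such that: (i) all their global and marginal second-order moments coincide, ‖r^{(1)}‖² = ‖r̃^{(1)}‖², ‖r^{(2)}‖² = ‖r̃^{(2)}‖², ‖T‖² = ‖T̃‖²; (ii) ρ is separable while ρ̃ is not separable; and consequently (iii) there are no U₁, U₂ ∈ SU(2) with ρ̃ = (U₁ ⊗ U₂) ρ (U₁ ⊗ U₂)†. -/

import Mathlib

open Matrix Complex BigOperators Kronecker
open scoped ComplexOrder

/-- The three Pauli matrices σ₁, σ₂, σ₃ (indexed by `Fin 3`). -/
noncomputable def pauli : Fin 3 → Matrix (Fin 2) (Fin 2) ℂ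
  | 0 => !![0, 1; 1, 0]
  | 1 => !![0, -Complex.I; Complex.I, 0]
  | 2 => !![1, 0; 0, -1]

/-- Marginal Bloch vector of the first qubit: `r⁽¹⁾_i = Tr (ρ (σ_i ⊗ 1))`. -/
noncomputable def bloch1 (ρ : Matrix (Fin 2 × Fin 2) (Fin 2 × Fin 2) ℂ) : Fin 3 → ℝ :=
  fun i => ((ρ * (pauli i ⊗ₖ (1 : Matrix (Fin 2) (Fin 2) ℂ))).trace).re

/-- Marginal Bloch vector of the second qubit: `r⁽²⁾_j = Tr (ρ (1 ⊗ σ_j))`. -/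
noncomputable def bloch2 (ρ : Matrix (Fin 2 × Fin 2) (Fin 2 × Fin 2) ℂ) : Fin 3 → ℝ :=
  fun j => ((ρ * ((1 : Matrix (Fin 2) (Fin 2) ℂ) ⊗ₖ pauli j)).trace).re

/-- Correlation matrix: `T_{ij} = Tr (ρ (σ_i ⊗ σ_j))`. -/
noncomputable def corr (ρ : Matrix (Fin 2 × Fin 2) (Fin 2 × Fin 2) ℂ) :
    Matrix (Fin 3) (Fin 3) ℝ :=
  Matrix.of fun i j => ((ρ * (pauli i ⊗ₖ pauli j)).trace).re

/-- Membership in SU(2): unitary 2×2 complex matrix of determinant 1. -/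
def IsSU2 (U : Matrix (Fin 2) (Fin 2) ℂ) : Prop := Uᴴ * U = 1 ∧ U.det = 1

/-- Membership in SO(3): orthogonal 3×3 real matrix of determinant 1. -/
def IsSO3 (Q : Matrix (Fin 3) (Fin 3) ℝ) : Prop := Qᵀ * Q = 1 ∧ Q.det = 1

/-- A two-qubit state is separable if it is a finite convex combination of Kronecker
products of 2×2 density matrices. -/
def SeparableState (ρ : Matrix (Fin 2 × Fin 2) (Fin 2 × Fin 2) ℂ) : Prop :=
  ∃ (n : ℕ) (p : Fin n → ℝ) (A B : Fin n → Matrix (Fin 2) (Fin 2) ℂ),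
    (∀ k, 0 ≤ p k) ∧ (∑ k, p k = 1) ∧
    (∀ k, (A k).PosSemidef ∧ (A k).trace = 1) ∧
    (∀ k, (B k).PosSemidef ∧ (B k).trace = 1) ∧
    ρ = ∑ k, (p k : ℂ) • (A k ⊗ₖ B k)

/-! ### Auxiliary material -/

lemma psd_rank1 {n : Type*} [Fintype n] (v : n → ℂ) : (vecMulVec v (star v)).PosSemidef := by
  rw [posSemidef_iff_dotProduct_mulVec]
  constructor
  · ext i j
    simp [vecMulVec_apply, conjTranspose_apply, mul_comm]
  · intro x
    have : dotProduct (star x) ((vecMulVec v (star v)) *ᵥ x)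
        = (star x ⬝ᵥ v) * star (star x ⬝ᵥ v) := by
      simp [dotProduct, mulVec, vecMulVec_apply, Finset.mul_sum, Finset.sum_mul]
      rw [Finset.sum_comm]
      congr 1; ext i; congr 1; ext j; ring
    rw [this]
    exact mul_star_self_nonneg _

lemma psd_smul {n : Type*} [Fintype n] {M : Matrix n n ℂ} (h : M.PosSemidef) {c : ℝ}
    (hc : 0 ≤ c) : ((c:ℂ) • M).PosSemidef := by
  rw [posSemidef_iff_dotProduct_mulVec]
  constructor
  · rw [Matrix.IsHermitian, conjTranspose_smul, h.1.eq]
    congr 1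
    simp [Complex.star_def, Complex.conj_ofReal]
  · intro x
    rw [smul_mulVec, dotProduct_smul, smul_eq_mul]
    exact mul_nonneg (by exact_mod_cast hc) (h.dotProduct_mulVec_nonneg x)

lemma trace_psd_nonneg {n : Type*} [Fintype n] [DecidableEq n] {M : Matrix n n ℂ}
    (h : M.PosSemidef) : 0 ≤ M.trace := by
  rw [Matrix.trace]
  apply Finset.sum_nonneg
  intro i _
  have := h.dotProduct_mulVec_nonneg (Pi.single i 1)
  simpa [dotProduct, mulVec, Pi.single_apply] using this

lemma trace_mul_psd_nonneg {n : Type*} [Fintype n] [DecidableEq n] {A B : Matrix n n ℂ}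
    (hA : A.PosSemidef) (hB : B.PosSemidef) : 0 ≤ (A * B).trace := by
  obtain ⟨C, rfl⟩ : ∃ C : Matrix n n ℂ, A = Cᴴ * C := by
    open MatrixOrder in
    obtain ⟨X, hX, -, hXA⟩ := CFC.exists_sqrt_of_isSelfAdjoint_of_quasispectrumRestricts
      hA.isHermitian (QuasispectrumRestricts.nnreal_of_nonneg hA.nonneg)
    refine ⟨X, ?_⟩
    rw [← star_eq_conjTranspose, hX.star_eq, hXA]
  have h1 : (Cᴴ * C * B).trace = (C * B * Cᴴ).trace := by
    rw [Matrix.mul_assoc, Matrix.trace_mul_comm, Matrix.mul_assoc]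
  rw [h1]
  exact trace_psd_nonneg (hB.mul_mul_conjTranspose_same C)

/-- rank-one vectors for the separable state -/
noncomputable def wvec : Fin 4 → Fin 2 × Fin 2 → ℂ
  | 0 => fun x => ![![1 - Complex.I, 1], ![0, 0]] x.1 x.2
  | 1 => fun x => ![![1, 0], ![0, 0]] x.1 x.2
  | 2 => fun x => ![![0, 0], ![1, -1 - Complex.I]] x.1 x.2
  | 3 => fun x => ![![0, 0], ![0, 1]] x.1 x.2

/-- rank-one vectors for the entangled state -/
noncomputable def uvec : Fin 4 → Fin 2 × Fin 2 → ℂ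
  | 0 => fun x => ![![1, 0], ![0, 0]] x.1 x.2
  | 1 => fun x => ![![0, 0], ![0, 1]] x.1 x.2
  | 2 => fun x => ![![0, 1], ![1, 0]] x.1 x.2
  | 3 => fun x => ![![0, 1], ![-1, 0]] x.1 x.2

/-- the separable state: `(1/4)(1⊗1 + (1/2)(σ₁+σ₂+σ₃)⊗σ₃)`-like classical mixture -/
noncomputable def rho0 : Matrix (Fin 2 × Fin 2) (Fin 2 × Fin 2) ℂ :=
  (((1:ℝ)/8 : ℝ) : ℂ) • (vecMulVec (wvec 0) (star (wvec 0)) + vecMulVec (wvec 1) (star (wvec 1))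
    + vecMulVec (wvec 2) (star (wvec 2)) + vecMulVec (wvec 3) (star (wvec 3)))

/-- the entangled state: Bell-diagonal with `t = (1/2, 1/2, -1/2)` -/
noncomputable def rho1 : Matrix (Fin 2 × Fin 2) (Fin 2 × Fin 2) ℂ :=
  (((1:ℝ)/8 : ℝ) : ℂ) • (vecMulVec (uvec 0) (star (uvec 0)) + vecMulVec (uvec 1) (star (uvec 1)))
  + (((5:ℝ)/16 : ℝ) : ℂ) • vecMulVec (uvec 2) (star (uvec 2))
  + (((1:ℝ)/16 : ℝ) : ℂ) • vecMulVec (uvec 3) (star (uvec 3))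

/-- the entanglement witness -/
noncomputable def Wit : Matrix (Fin 2 × Fin 2) (Fin 2 × Fin 2) ℂ :=
  !![(1:ℂ),0;0,0] ⊗ₖ !![(1:ℂ),0;0,0] + !![(0:ℂ),0;0,1] ⊗ₖ !![(0:ℂ),0;0,1]
  - !![(0:ℂ),1;0,0] ⊗ₖ !![(0:ℂ),0;1,0] - !![(0:ℂ),0;1,0] ⊗ₖ !![(0:ℂ),1;0,0]

noncomputable def Zm : Matrix (Fin 2) (Fin 2) ℂ := !![1,0;0,-1]

lemma wit_trace (A B : Matrix (Fin 2) (Fin 2) ℂ) :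
    ((A ⊗ₖ B) * Wit).trace = (A * (Zm * B * Zmᴴ)).trace := by
  simp [Wit, Zm, Matrix.trace, Matrix.diag, Matrix.mul_apply, Fintype.sum_prod_type,
    Fin.sum_univ_two, kroneckerMap_apply, Matrix.add_apply, Matrix.sub_apply,
    conjTranspose_apply, Matrix.vecMul, dotProduct, Matrix.vecHead, Matrix.vecTail]

lemma wit_nonneg {A B : Matrix (Fin 2) (Fin 2) ℂ} (hA : A.PosSemidef) (hB : B.PosSemidef) :
    0 ≤ (((A ⊗ₖ B) * Wit).trace).re := by
  rw [wit_trace]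
  have h := trace_mul_psd_nonneg hA (hB.mul_mul_conjTranspose_same Zm)
  exact (Complex.le_def.mp h).1

lemma kron_conjT (A B : Matrix (Fin 2) (Fin 2) ℂ) : (A ⊗ₖ B)ᴴ = Aᴴ ⊗ₖ Bᴴ := by
  ext ⟨i,j⟩ ⟨k,l⟩
  simp [conjTranspose_apply, kroneckerMap_apply, mul_comm]

/-- the non-separability of `rho1` -/
lemma rho1_wit : ((rho1 * Wit).trace).re = -(1/4) := by
  simp [rho1, Wit, uvec, Matrix.trace, Matrix.diag, Matrix.mul_apply, Fintype.sum_prod_type,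
    Fin.sum_univ_two, kroneckerMap_apply, Matrix.add_apply, Matrix.sub_apply,
    Matrix.smul_apply, vecMulVec_apply]
  norm_num

lemma rho1_not_separable : ¬ SeparableState rho1 := by
  rintro ⟨n, p, A, B, hp, -, hA, hB, heq⟩
  have key : 0 ≤ ((rho1 * Wit).trace).re := by
    rw [heq, Finset.sum_mul, Matrix.trace_sum]
    rw [Complex.re_sum]
    apply Finset.sum_nonneg
    intro k _
    rw [smul_mul_assoc, Matrix.trace_smul, smul_eq_mul, Complex.re_ofReal_mul]
    exact mul_nonneg (hp k) (wit_nonneg (hA k).1 (hB k).1)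
  rw [rho1_wit] at key
  linarith

lemma rho0_separable : SeparableState rho0 := by
  refine ⟨2, ![1/2, 1/2], ![!![1,0;0,0], !![0,0;0,1]],
    ![!![3/4, (1-Complex.I)/4; (1+Complex.I)/4, 1/4],
      !![1/4, (-1+Complex.I)/4; (-1-Complex.I)/4, 3/4]], ?_, ?_, ?_, ?_, ?_⟩
  · rw [Fin.forall_fin_two]; norm_num
  · simp [Fin.sum_univ_two]; norm_num
  · rw [Fin.forall_fin_two]
    simp only [Matrix.cons_val_zero, Matrix.cons_val_one, Matrix.head_cons]
    refine ⟨⟨?_, ?_⟩, ?_, ?_⟩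
    · have h : (!![(1:ℂ),0;0,0]) = vecMulVec ![1,0] (star ![(1:ℂ),0]) := by
        ext i j; fin_cases i <;> fin_cases j <;> simp [vecMulVec_apply]
      rw [h]; exact psd_rank1 _
    · simp [Matrix.trace, Matrix.diag, Fin.sum_univ_two]
    · have h : (!![(0:ℂ),0;0,1]) = vecMulVec ![0,1] (star ![(0:ℂ),1]) := by
        ext i j; fin_cases i <;> fin_cases j <;> simp [vecMulVec_apply]
      rw [h]; exact psd_rank1 _
    · simp [Matrix.trace, Matrix.diag, Fin.sum_univ_two]
  · rw [Fin.forall_fin_two]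
    simp only [Matrix.cons_val_zero, Matrix.cons_val_one, Matrix.head_cons]
    refine ⟨⟨?_, ?_⟩, ?_, ?_⟩
    · have h : (!![(3:ℂ)/4, (1-Complex.I)/4; (1+Complex.I)/4, 1/4])
          = ((1/4 : ℝ) : ℂ) • (vecMulVec ![1-Complex.I,1] (star ![1-Complex.I,(1:ℂ)])
            + vecMulVec ![1,0] (star ![(1:ℂ),0])) := by
        ext i j
        fin_cases i <;> fin_cases j <;>
          simp [-cons_vecMulVec, vecMulVec_apply, Matrix.add_apply, Matrix.smul_apply] <;>
          norm_num [Complex.ext_iff]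
      rw [h]; exact psd_smul ((psd_rank1 _).add (psd_rank1 _)) (by norm_num)
    · simp [Matrix.trace, Matrix.diag, Fin.sum_univ_two]; norm_num
    · have h : (!![(1:ℂ)/4, (-1+Complex.I)/4; (-1-Complex.I)/4, 3/4])
          = ((1/4 : ℝ) : ℂ) • (vecMulVec ![1,-1-Complex.I] (star ![(1:ℂ),-1-Complex.I])
            + vecMulVec ![0,1] (star ![(0:ℂ),1])) := by
        ext i j
        fin_cases i <;> fin_cases j <;>
          simp [-cons_vecMulVec, vecMulVec_apply, Matrix.add_apply, Matrix.smul_apply] <;>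
          norm_num [Complex.ext_iff]
      rw [h]; exact psd_smul ((psd_rank1 _).add (psd_rank1 _)) (by norm_num)
    · simp [Matrix.trace, Matrix.diag, Fin.sum_univ_two]; norm_num
  · ext ⟨i,j⟩ ⟨k,l⟩
    fin_cases i <;> fin_cases j <;> fin_cases k <;> fin_cases l <;>
      simp [rho0, wvec, vecMulVec_apply, Fin.sum_univ_two, kroneckerMap_apply,
        Matrix.smul_apply, Matrix.add_apply] <;> norm_num [Complex.ext_iff]

lemma rho0_psd : rho0.PosSemidef := by
  unfold rho0
  exact psd_smul ((((psd_rank1 _).add (psd_rank1 _)).add (psd_rank1 _)).add (psd_rank1 _))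
    (by norm_num)

lemma rho1_psd : rho1.PosSemidef := by
  unfold rho1
  refine PosSemidef.add (PosSemidef.add ?_ ?_) ?_
  · exact psd_smul ((psd_rank1 _).add (psd_rank1 _)) (by norm_num)
  · exact psd_smul (psd_rank1 _) (by norm_num)
  · exact psd_smul (psd_rank1 _) (by norm_num)

lemma rho0_trace : rho0.trace = 1 := by
  simp [rho0, Matrix.trace, Matrix.diag, Fintype.sum_prod_type, Fin.sum_univ_two,
    vecMulVec_apply, wvec, Matrix.smul_apply, Matrix.add_apply]
  norm_num [Complex.ext_iff]

lemma rho1_trace : rho1.trace = 1 := by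
  simp [rho1, Matrix.trace, Matrix.diag, Fintype.sum_prod_type, Fin.sum_univ_two,
    vecMulVec_apply, uvec, Matrix.smul_apply, Matrix.add_apply]
  norm_num [Complex.ext_iff]

set_option maxHeartbeats 1000000 in
lemma rho0_bloch1_0 : bloch1 rho0 0 = 0 := by
  simp [bloch1, rho0, Matrix.trace, Matrix.diag, Matrix.mul_apply, Fintype.sum_prod_type,
    Fin.sum_univ_two, vecMulVec_apply, wvec, Matrix.smul_apply, Matrix.add_apply,
    kroneckerMap_apply, Matrix.one_apply, pauli]
  all_goals norm_num

set_option maxHeartbeats 1000000 in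
lemma rho0_bloch1_1 : bloch1 rho0 1 = 0 := by
  simp [bloch1, rho0, Matrix.trace, Matrix.diag, Matrix.mul_apply, Fintype.sum_prod_type,
    Fin.sum_univ_two, vecMulVec_apply, wvec, Matrix.smul_apply, Matrix.add_apply,
    kroneckerMap_apply, Matrix.one_apply, pauli]
  all_goals norm_num

set_option maxHeartbeats 1000000 in
lemma rho0_bloch1_2 : bloch1 rho0 2 = 0 := by
  simp [bloch1, rho0, Matrix.trace, Matrix.diag, Matrix.mul_apply, Fintype.sum_prod_type,
    Fin.sum_univ_two, vecMulVec_apply, wvec, Matrix.smul_apply, Matrix.add_apply,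
    kroneckerMap_apply, Matrix.one_apply, pauli]
  all_goals norm_num

set_option maxHeartbeats 1000000 in
lemma rho1_bloch1_0 : bloch1 rho1 0 = 0 := by
  simp [bloch1, rho1, Matrix.trace, Matrix.diag, Matrix.mul_apply, Fintype.sum_prod_type,
    Fin.sum_univ_two, vecMulVec_apply, uvec, Matrix.smul_apply, Matrix.add_apply,
    kroneckerMap_apply, Matrix.one_apply, pauli]
  all_goals norm_num

set_option maxHeartbeats 1000000 in
lemma rho1_bloch1_1 : bloch1 rho1 1 = 0 := by
  simp [bloch1, rho1, Matrix.trace, Matrix.diag, Matrix.mul_apply, Fintype.sum_prod_type,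
    Fin.sum_univ_two, vecMulVec_apply, uvec, Matrix.smul_apply, Matrix.add_apply,
    kroneckerMap_apply, Matrix.one_apply, pauli]
  all_goals norm_num

set_option maxHeartbeats 1000000 in
lemma rho1_bloch1_2 : bloch1 rho1 2 = 0 := by
  simp [bloch1, rho1, Matrix.trace, Matrix.diag, Matrix.mul_apply, Fintype.sum_prod_type,
    Fin.sum_univ_two, vecMulVec_apply, uvec, Matrix.smul_apply, Matrix.add_apply,
    kroneckerMap_apply, Matrix.one_apply, pauli]
  all_goals norm_num

set_option maxHeartbeats 1000000 in
lemma rho0_bloch2_0 : bloch2 rho0 0 = 0 := by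
  simp [bloch2, rho0, Matrix.trace, Matrix.diag, Matrix.mul_apply, Fintype.sum_prod_type,
    Fin.sum_univ_two, vecMulVec_apply, wvec, Matrix.smul_apply, Matrix.add_apply,
    kroneckerMap_apply, Matrix.one_apply, pauli]
  all_goals norm_num

set_option maxHeartbeats 1000000 in
lemma rho0_bloch2_1 : bloch2 rho0 1 = 0 := by
  simp [bloch2, rho0, Matrix.trace, Matrix.diag, Matrix.mul_apply, Fintype.sum_prod_type,
    Fin.sum_univ_two, vecMulVec_apply, wvec, Matrix.smul_apply, Matrix.add_apply,
    kroneckerMap_apply, Matrix.one_apply, pauli]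
  all_goals norm_num

set_option maxHeartbeats 1000000 in
lemma rho0_bloch2_2 : bloch2 rho0 2 = 0 := by
  simp [bloch2, rho0, Matrix.trace, Matrix.diag, Matrix.mul_apply, Fintype.sum_prod_type,
    Fin.sum_univ_two, vecMulVec_apply, wvec, Matrix.smul_apply, Matrix.add_apply,
    kroneckerMap_apply, Matrix.one_apply, pauli]
  all_goals norm_num

set_option maxHeartbeats 1000000 in
lemma rho1_bloch2_0 : bloch2 rho1 0 = 0 := by
  simp [bloch2, rho1, Matrix.trace, Matrix.diag, Matrix.mul_apply, Fintype.sum_prod_type,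
    Fin.sum_univ_two, vecMulVec_apply, uvec, Matrix.smul_apply, Matrix.add_apply,
    kroneckerMap_apply, Matrix.one_apply, pauli]
  all_goals norm_num

set_option maxHeartbeats 1000000 in
lemma rho1_bloch2_1 : bloch2 rho1 1 = 0 := by
  simp [bloch2, rho1, Matrix.trace, Matrix.diag, Matrix.mul_apply, Fintype.sum_prod_type,
    Fin.sum_univ_two, vecMulVec_apply, uvec, Matrix.smul_apply, Matrix.add_apply,
    kroneckerMap_apply, Matrix.one_apply, pauli]
  all_goals norm_num

set_option maxHeartbeats 1000000 in
lemma rho1_bloch2_2 : bloch2 rho1 2 = 0 := by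
  simp [bloch2, rho1, Matrix.trace, Matrix.diag, Matrix.mul_apply, Fintype.sum_prod_type,
    Fin.sum_univ_two, vecMulVec_apply, uvec, Matrix.smul_apply, Matrix.add_apply,
    kroneckerMap_apply, Matrix.one_apply, pauli]
  all_goals norm_num

set_option maxHeartbeats 2000000 in
lemma rho0_corr : (∑ i, ∑ j, (corr rho0 i j) ^ 2) = 3/4 := by
  simp only [Fin.sum_univ_three, corr, Matrix.of_apply]
  simp [rho0, Matrix.trace, Matrix.diag, Matrix.mul_apply, Fintype.sum_prod_type,
    Fin.sum_univ_two, vecMulVec_apply, wvec, Matrix.smul_apply, Matrix.add_apply,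
    kroneckerMap_apply, pauli]
  norm_num

set_option maxHeartbeats 2000000 in
lemma rho1_corr : (∑ i, ∑ j, (corr rho1 i j) ^ 2) = 3/4 := by
  simp only [Fin.sum_univ_three, corr, Matrix.of_apply]
  simp [rho1, Matrix.trace, Matrix.diag, Matrix.mul_apply, Fintype.sum_prod_type,
    Fin.sum_univ_two, vecMulVec_apply, uvec, Matrix.smul_apply, Matrix.add_apply,
    kroneckerMap_apply, pauli]
  norm_num

lemma separable_conj {ρ : Matrix (Fin 2 × Fin 2) (Fin 2 × Fin 2) ℂ}
    (h : SeparableState ρ) {U₁ U₂ : Matrix (Fin 2) (Fin 2) ℂ}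
    (h1 : IsSU2 U₁) (h2 : IsSU2 U₂) :
    SeparableState ((U₁ ⊗ₖ U₂) * ρ * (U₁ ⊗ₖ U₂)ᴴ) := by
  obtain ⟨n, p, A, B, hp, hsum, hA, hB, heq⟩ := h
  refine ⟨n, p, fun k => U₁ * A k * U₁ᴴ, fun k => U₂ * B k * U₂ᴴ, hp, hsum, ?_, ?_, ?_⟩
  · intro k
    refine ⟨(hA k).1.mul_mul_conjTranspose_same U₁, ?_⟩
    rw [Matrix.trace_mul_cycle, h1.1, Matrix.one_mul, (hA k).2]
  · intro k
    refine ⟨(hB k).1.mul_mul_conjTranspose_same U₂, ?_⟩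
    rw [Matrix.trace_mul_cycle, h2.1, Matrix.one_mul, (hB k).2]
  · rw [heq, Finset.mul_sum, Finset.sum_mul]
    apply Finset.sum_congr rfl
    intro k _
    rw [mul_smul_comm, smul_mul_assoc]
    congr 1
    rw [kron_conjT, Matrix.mul_kronecker_mul, Matrix.mul_kronecker_mul]

theorem moments_do_not_suffice_for_entanglement_detection :
    ∃ ρ ρt : Matrix (Fin 2 × Fin 2) (Fin 2 × Fin 2) ℂ,
      (ρ.PosSemidef ∧ ρ.trace = 1) ∧ (ρt.PosSemidef ∧ ρt.trace = 1) ∧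
      ((∑ i, (bloch1 ρ i) ^ 2) = (∑ i, (bloch1 ρt i) ^ 2) ∧
       (∑ j, (bloch2 ρ j) ^ 2) = (∑ j, (bloch2 ρt j) ^ 2) ∧
       (∑ i, ∑ j, (corr ρ i j) ^ 2) = (∑ i, ∑ j, (corr ρt i j) ^ 2)) ∧
      SeparableState ρ ∧ ¬ SeparableState ρt ∧
      ¬ ∃ U₁ U₂ : Matrix (Fin 2) (Fin 2) ℂ, IsSU2 U₁ ∧ IsSU2 U₂ ∧
          ρt = (U₁ ⊗ₖ U₂) * ρ * (U₁ ⊗ₖ U₂)ᴴ := by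
  refine ⟨rho0, rho1, ⟨rho0_psd, rho0_trace⟩, ⟨rho1_psd, rho1_trace⟩, ⟨?_, ?_, ?_⟩,
    rho0_separable, rho1_not_separable, ?_⟩
  · simp [Fin.sum_univ_three, rho0_bloch1_0, rho0_bloch1_1, rho0_bloch1_2,
      rho1_bloch1_0, rho1_bloch1_1, rho1_bloch1_2]
  · simp [Fin.sum_univ_three, rho0_bloch2_0, rho0_bloch2_1, rho0_bloch2_2,
      rho1_bloch2_0, rho1_bloch2_1, rho1_bloch2_2]
  · rw [rho0_corr, rho1_corr]
  · rintro ⟨U₁, U₂, h1, h2, heq⟩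
    exact rho1_not_separable (heq ▸ separable_conj rho0_separable h1 h2)
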